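/- arXiv:2109.08923 — 2 statements merged into one kernel-verified Lean document; each statement's English description precedes it below -/
import Mathlib

section
/- Let T be a random variable with 0 ≤ T ≤ 1 almost surely, let 0 < μ < 1, 0 < c < 1, set θ = (1−c)·μ, let T_1, T_2, … be an i.i.d. sample of T, and let M_k(c) = ∏_{i=1}^k ((1−c) + c·(1−T_i)/(1−μ)) with M_0(c) = 1. Then: (i) if E[T] ≤ θ, then E[((1−c) + c·(1−T)/(1−μ))^{−1}] ≤ 1, so that {M_k(c)^{−1}}_{k≥0} is a nonnegative supermartingale with respect to the natural filtration of (T_i), and moreover M_k(c) → +∞ almost surely as k → ∞; (ii) if E[T] ≥ μ and P(T = μ) < 1, then M_k(c)^{−1} → +∞ almost surely as k → ∞. -/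
open MeasureTheory ProbabilityTheory Filter



/-- Affine expression of the factor. -/
lemma tsm_affine (μ c t : ℝ) (hμ1 : μ ≠ 1) :
    (1 - c) + c * (1 - t) / (1 - μ)
      = (1 - t) * ((1 - c) + c / (1 - μ)) + t * (1 - c) := by
  have h : (1 : ℝ) - μ ≠ 0 := sub_ne_zero.2 (Ne.symm hμ1)
  field_simp
  ring

lemma tsm_comb_pos {a b t : ℝ} (ha : 0 < a) (hb : 0 < b) (ht0 : 0 ≤ t) (ht1 : t ≤ 1) :
    0 < (1 - t) * a + t * b := by
  have h1 : min a b * (1 - t) ≤ a * (1 - t) :=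
    mul_le_mul_of_nonneg_right (min_le_left a b) (by linarith)
  have h2 : min a b * t ≤ b * t := mul_le_mul_of_nonneg_right (min_le_right a b) ht0
  have h3 : 0 < min a b := lt_min ha hb
  nlinarith

/-- Chord bound for the inverse of a positive affine function. -/
lemma tsm_inv_chord_abstract {a b t : ℝ} (ha : 0 < a) (hb : 0 < b)
    (ht0 : 0 ≤ t) (ht1 : t ≤ 1) :
    ((1 - t) * a + t * b)⁻¹ ≤ (1 - t) * a⁻¹ + t * b⁻¹ := by
  have hf : 0 < (1 - t) * a + t * b := tsm_comb_pos ha hb ht0 ht1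
  rw [← one_div, div_le_iff₀ hf]
  have expand : (1 - t) * a⁻¹ + t * b⁻¹ = ((1 - t) * b + t * a) / (a * b) := by
    field_simp
  rw [expand, div_mul_eq_mul_div, le_div_iff₀ (mul_pos ha hb), one_mul]
  nlinarith [mul_nonneg (mul_nonneg ht0 (sub_nonneg.2 ht1)) (sq_nonneg (a - b))]

/-- Bounds for the factor on `[0,1]`. -/
lemma tsm_bounds (μ c t : ℝ) (hμ : μ ∈ Set.Ioo (0:ℝ) 1) (hc : c ∈ Set.Ioo (0:ℝ) 1)
    (ht : t ∈ Set.Icc (0:ℝ) 1) :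
    1 - c ≤ (1 - c) + c * (1 - t) / (1 - μ) ∧
    (1 - c) + c * (1 - t) / (1 - μ) ≤ (1 - c) + c / (1 - μ) := by
  obtain ⟨hμ0, hμ1⟩ := hμ
  obtain ⟨hc0, hc1⟩ := hc
  obtain ⟨ht0, ht1⟩ := ht
  have h1μ : (0:ℝ) < 1 - μ := by linarith
  constructor
  · have : 0 ≤ c * (1 - t) / (1 - μ) :=
      div_nonneg (mul_nonneg hc0.le (by linarith)) h1μ.le
    linarith
  · have : c * (1 - t) / (1 - μ) ≤ c / (1 - μ) := by
      gcongr <;> nlinarith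
    linarith

/-- Chord bound for the inverse factor. -/
lemma tsm_inv_chord (μ c t : ℝ) (hμ : μ ∈ Set.Ioo (0:ℝ) 1) (hc : c ∈ Set.Ioo (0:ℝ) 1)
    (ht : t ∈ Set.Icc (0:ℝ) 1) :
    ((1 - c) + c * (1 - t) / (1 - μ))⁻¹
      ≤ (1 - t) * ((1 - c) + c / (1 - μ))⁻¹ + t * (1 - c)⁻¹ := by
  obtain ⟨hμ0, hμ1⟩ := hμ
  obtain ⟨hc0, hc1⟩ := hc
  have h1μ : (0:ℝ) < 1 - μ := by linarith
  have ha : (0:ℝ) < (1 - c) + c / (1 - μ) := by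
    have := div_pos hc0 h1μ; linarith
  have hb : (0:ℝ) < 1 - c := by linarith
  rw [tsm_affine μ c t (by linarith : μ ≠ 1)]
  exact tsm_inv_chord_abstract ha hb ht.1 ht.2

/-- Chord bound for log of positive affine function. -/
lemma tsm_log_chord_abstract {a b t : ℝ} (ha : 0 < a) (hb : 0 < b)
    (ht0 : 0 ≤ t) (ht1 : t ≤ 1) :
    (1 - t) * Real.log a + t * Real.log b ≤ Real.log ((1 - t) * a + t * b) := by
  have := strictConcaveOn_log_Ioi.concaveOn.2 (Set.mem_Ioi.2 ha) (Set.mem_Ioi.2 hb)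
    (by linarith : (0:ℝ) ≤ 1 - t) ht0 (by ring)
  simpa [smul_eq_mul] using this

/-- Positivity of the chord value at θ. -/
lemma tsm_delta_pos (μ c θ : ℝ) (hμ : μ ∈ Set.Ioo (0:ℝ) 1) (hc : c ∈ Set.Ioo (0:ℝ) 1)
    (hθ : θ = (1 - c) * μ) :
    0 < (1 - θ) * Real.log ((1 - c) + c / (1 - μ)) + θ * Real.log (1 - c) := by
  obtain ⟨hμ0, hμ1⟩ := hμ
  obtain ⟨hc0, hc1⟩ := hc
  have h1μ : (0:ℝ) < 1 - μ := by linarith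
  set a : ℝ := (1 - c) + c / (1 - μ) with ha_def
  have hb : (0:ℝ) < 1 - c := by linarith
  have ha : 0 < a := by
    have := div_pos hc0 h1μ; rw [ha_def]; linarith
  have hθ0 : 0 < θ := by rw [hθ]; positivity
  have hθ1 : θ < 1 := by nlinarith
  have hane : a⁻¹ ≠ (1 - c)⁻¹ := by
    have hgt : 1 - c < a := by
      rw [ha_def]
      have h1 : c < c / (1 - μ) := by
        rw [lt_div_iff₀ h1μ]; nlinarith
      linarith
    intro h
    have := inv_injective h
    linarith
  have hcomb : (1 - θ) * a⁻¹ + θ * (1 - c)⁻¹ = 1 := by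
    rw [hθ, ha_def]
    field_simp
    ring
  have hstrict := strictConcaveOn_log_Ioi.2 (Set.mem_Ioi.2 (inv_pos.2 ha))
    (Set.mem_Ioi.2 (inv_pos.2 hb)) hane (by linarith : (0:ℝ) < 1 - θ) hθ0 (by ring)
  rw [smul_eq_mul, smul_eq_mul, smul_eq_mul, smul_eq_mul, hcomb, Real.log_one,
    Real.log_inv, Real.log_inv] at hstrict
  linarith

lemma tsm_measurable_factor (μ c : ℝ) :
    Measurable (fun t : ℝ => (1 - c) + c * (1 - t) / (1 - μ)) := by
  fun_prop

lemma tsm_measurable_log (μ c : ℝ) :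
    Measurable (fun t : ℝ => Real.log ((1 - c) + c * (1 - t) / (1 - μ))) :=
  Real.measurable_log.comp (tsm_measurable_factor μ c)

/-- Integrability of a function of `T₀` bounded on `[0,1]`. -/
lemma tsm_integrable_comp {Ω : Type*} {mΩ : MeasurableSpace Ω} (P : Measure Ω)
    [IsProbabilityMeasure P] (T₀ : Ω → ℝ) (hT₀ : AEMeasurable T₀ P)
    (hT₀range : ∀ᵐ ω ∂P, T₀ ω ∈ Set.Icc (0:ℝ) 1)
    (φ : ℝ → ℝ) (hφ : Measurable φ) (C : ℝ) (hC : ∀ t ∈ Set.Icc (0:ℝ) 1, |φ t| ≤ C) :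
    Integrable (fun ω => φ (T₀ ω)) P := by
  refine Integrable.mono' (integrable_const C)
    (hφ.comp_aemeasurable hT₀).aestronglyMeasurable ?_
  filter_upwards [hT₀range] with ω hω
  simpa [Real.norm_eq_abs] using hC _ hω

/-- Bound on `|log f(t)|` on `[0,1]`. -/
lemma tsm_abs_log_bound (μ c : ℝ) (hμ : μ ∈ Set.Ioo (0:ℝ) 1) (hc : c ∈ Set.Ioo (0:ℝ) 1)
    (t : ℝ) (ht : t ∈ Set.Icc (0:ℝ) 1) :
    |Real.log ((1 - c) + c * (1 - t) / (1 - μ))|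
      ≤ |Real.log (1 - c)| + |Real.log ((1 - c) + c / (1 - μ))| := by
  obtain ⟨hlb, hub⟩ := tsm_bounds μ c t hμ hc ht
  have hb : (0:ℝ) < 1 - c := by linarith [hc.2]
  have h1 : Real.log (1 - c) ≤ Real.log ((1 - c) + c * (1 - t) / (1 - μ)) :=
    Real.log_le_log hb hlb
  have h2 : Real.log ((1 - c) + c * (1 - t) / (1 - μ)) ≤ Real.log ((1 - c) + c / (1 - μ)) :=
    Real.log_le_log (by linarith) hub
  rw [abs_le]
  constructor
  · calc -( |Real.log (1 - c)| + |Real.log ((1 - c) + c / (1 - μ))| )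
        ≤ -|Real.log (1 - c)| := by
          have := abs_nonneg (Real.log ((1 - c) + c / (1 - μ))); linarith
    _ ≤ Real.log (1 - c) := neg_abs_le _
    _ ≤ _ := h1
  · calc Real.log ((1 - c) + c * (1 - t) / (1 - μ))
        ≤ Real.log ((1 - c) + c / (1 - μ)) := h2
    _ ≤ |Real.log ((1 - c) + c / (1 - μ))| := le_abs_self _
    _ ≤ _ := by have := abs_nonneg (Real.log (1 - c)); linarith

/-- Integrability of `log f(T₀)`. -/
lemma tsm_integrable_log {Ω : Type*} {mΩ : MeasurableSpace Ω} (P : Measure Ω)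
    [IsProbabilityMeasure P] (μ c : ℝ) (hμ : μ ∈ Set.Ioo (0:ℝ) 1) (hc : c ∈ Set.Ioo (0:ℝ) 1)
    (T₀ : Ω → ℝ) (hT₀ : AEMeasurable T₀ P) (hT₀range : ∀ᵐ ω ∂P, T₀ ω ∈ Set.Icc (0:ℝ) 1) :
    Integrable (fun ω => Real.log ((1 - c) + c * (1 - T₀ ω) / (1 - μ))) P :=
  tsm_integrable_comp P T₀ hT₀ hT₀range _ (tsm_measurable_log μ c) _
    (fun t ht => tsm_abs_log_bound μ c hμ hc t ht)

/-- Part (i) key: positive expected log. -/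
lemma tsm_integral_log_pos {Ω : Type*} {mΩ : MeasurableSpace Ω} (P : Measure Ω)
    [IsProbabilityMeasure P] (μ c θ : ℝ) (hμ : μ ∈ Set.Ioo (0:ℝ) 1)
    (hc : c ∈ Set.Ioo (0:ℝ) 1) (hθ : θ = (1 - c) * μ)
    (T₀ : Ω → ℝ) (hT₀int : Integrable T₀ P)
    (hT₀range : ∀ᵐ ω ∂P, T₀ ω ∈ Set.Icc (0:ℝ) 1)
    (hET : ∫ ω, T₀ ω ∂P ≤ θ) :
    0 < ∫ ω, Real.log ((1 - c) + c * (1 - T₀ ω) / (1 - μ)) ∂P := by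
  obtain ⟨hμ0, hμ1⟩ := hμ
  obtain ⟨hc0, hc1⟩ := hc
  have h1μ : (0:ℝ) < 1 - μ := by linarith
  set a : ℝ := (1 - c) + c / (1 - μ) with ha_def
  have hb : (0:ℝ) < 1 - c := by linarith
  have ha : 0 < a := by have := div_pos hc0 h1μ; rw [ha_def]; linarith
  set La : ℝ := Real.log a
  set Lb : ℝ := Real.log (1 - c)
  -- pointwise chord bound
  have hpt : ∀ t ∈ Set.Icc (0:ℝ) 1,
      La + (Lb - La) * t ≤ Real.log ((1 - c) + c * (1 - t) / (1 - μ)) := by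
    intro t ht
    rw [tsm_affine μ c t (by linarith : μ ≠ 1)]
    have := tsm_log_chord_abstract ha hb ht.1 ht.2
    calc La + (Lb - La) * t = (1 - t) * La + t * Lb := by ring
      _ ≤ _ := this
  -- the linear function is integrable, the log is integrable
  have hlin_int : Integrable (fun ω => La + (Lb - La) * T₀ ω) P :=
    (integrable_const La).add (hT₀int.const_mul _)
  have hlog_int := tsm_integrable_log P μ c ⟨hμ0, hμ1⟩ ⟨hc0, hc1⟩ T₀
    hT₀int.aemeasurable hT₀range
  have hmono : ∫ ω, (La + (Lb - La) * T₀ ω) ∂P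
      ≤ ∫ ω, Real.log ((1 - c) + c * (1 - T₀ ω) / (1 - μ)) ∂P := by
    refine integral_mono_ae hlin_int hlog_int ?_
    filter_upwards [hT₀range] with ω hω using hpt _ hω
  have hlin_eq : ∫ ω, (La + (Lb - La) * T₀ ω) ∂P
      = La + (Lb - La) * ∫ ω, T₀ ω ∂P := by
    rw [integral_add (integrable_const La) (hT₀int.const_mul _), integral_const,
      integral_const_mul]
    simp
  have hδ := tsm_delta_pos μ c θ ⟨hμ0, hμ1⟩ ⟨hc0, hc1⟩ hθ
  have hLbLa : Lb - La ≤ 0 := by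
    have : Lb ≤ La := Real.log_le_log hb (by have := div_pos hc0 h1μ; rw [ha_def]; linarith)
    linarith
  have : La + (Lb - La) * θ ≤ La + (Lb - La) * ∫ ω, T₀ ω ∂P := by
    nlinarith
  have hδ' : (1 - θ) * La + θ * Lb = La + (Lb - La) * θ := by ring
  linarith [hmono, hlin_eq ▸ hmono]
/-- `f t - 1 = c*(μ - t)/(1-μ)`. -/
lemma tsm_sub_one (μ c t : ℝ) (hμ1 : μ ≠ 1) :
    (1 - c) + c * (1 - t) / (1 - μ) - 1 = c * (μ - t) / (1 - μ) := by
  have h : (1 : ℝ) - μ ≠ 0 := sub_ne_zero.2 (Ne.symm hμ1)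
  field_simp
  ring

/-- Part (ii) key: negative expected log. -/
lemma tsm_integral_log_neg {Ω : Type*} {mΩ : MeasurableSpace Ω} (P : Measure Ω)
    [IsProbabilityMeasure P] (μ c : ℝ) (hμ : μ ∈ Set.Ioo (0:ℝ) 1)
    (hc : c ∈ Set.Ioo (0:ℝ) 1)
    (T₀ : Ω → ℝ) (hT₀int : Integrable T₀ P)
    (hT₀range : ∀ᵐ ω ∂P, T₀ ω ∈ Set.Icc (0:ℝ) 1)
    (hET : μ ≤ ∫ ω, T₀ ω ∂P) (hPeq : P {ω | T₀ ω = μ} < 1) :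
    ∫ ω, Real.log ((1 - c) + c * (1 - T₀ ω) / (1 - μ)) ∂P < 0 := by
  obtain ⟨hμ0, hμ1⟩ := hμ
  obtain ⟨hc0, hc1⟩ := hc
  have h1μ : (0:ℝ) < 1 - μ := by linarith
  set g : Ω → ℝ := fun ω =>
    c * (μ - T₀ ω) / (1 - μ) - Real.log ((1 - c) + c * (1 - T₀ ω) / (1 - μ)) with hg_def
  have hlog_int := tsm_integrable_log P μ c ⟨hμ0, hμ1⟩ ⟨hc0, hc1⟩ T₀
    hT₀int.aemeasurable hT₀range
  have hlin_int : Integrable (fun ω => c * (μ - T₀ ω) / (1 - μ)) P := by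
    have : (fun ω => c * (μ - T₀ ω) / (1 - μ))
        = fun ω => (c / (1 - μ)) * (μ - T₀ ω) := by
      funext ω; field_simp
    rw [this]
    exact (((integrable_const μ).sub hT₀int).const_mul _)
  have hg_int : Integrable g P := hlin_int.sub hlog_int
  -- pointwise: 0 ≤ g, with equality only at T₀ ω = μ
  have hpt : ∀ t ∈ Set.Icc (0:ℝ) 1,
      Real.log ((1 - c) + c * (1 - t) / (1 - μ)) ≤ c * (μ - t) / (1 - μ) := by
    intro t ht
    have hf_pos : (0:ℝ) < (1 - c) + c * (1 - t) / (1 - μ) := by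
      have := (tsm_bounds μ c t ⟨hμ0, hμ1⟩ ⟨hc0, hc1⟩ ht).1; linarith
    have := Real.log_le_sub_one_of_pos hf_pos
    rw [tsm_sub_one μ c t (by linarith : μ ≠ 1)] at this
    linarith [this]
  have hg_nonneg : 0 ≤ᵐ[P] g := by
    filter_upwards [hT₀range] with ω hω
    have := hpt _ hω
    simp only [hg_def, Pi.zero_apply]
    linarith
  -- strict positivity of ∫ g
  have hg_pos : 0 < ∫ ω, g ω ∂P := by
    rcases lt_or_eq_of_le (integral_nonneg_of_ae hg_nonneg) with h | h
    · exact h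
    · exfalso
      have hzero : g =ᵐ[P] 0 :=
        (integral_eq_zero_iff_of_nonneg_ae hg_nonneg hg_int).1 h.symm
      have hTμ : ∀ᵐ ω ∂P, T₀ ω = μ := by
        filter_upwards [hzero, hT₀range] with ω h0 hω
        by_contra hne
        have hf_pos : (0:ℝ) < (1 - c) + c * (1 - T₀ ω) / (1 - μ) := by
          have := (tsm_bounds μ c (T₀ ω) ⟨hμ0, hμ1⟩ ⟨hc0, hc1⟩ hω).1; linarith
        have hfne : (1 - c) + c * (1 - T₀ ω) / (1 - μ) ≠ 1 := by
          intro h1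
          have h2 := tsm_sub_one μ c (T₀ ω) (by linarith : μ ≠ 1)
          rw [h1] at h2
          rw [sub_self, eq_comm, div_eq_zero_iff, mul_eq_zero] at h2
          rcases h2 with (h4 | h4) | h4
          · linarith
          · exact hne (by linarith)
          · linarith
        have hstrict := Real.log_lt_sub_one_of_pos hf_pos hfne
        rw [tsm_sub_one μ c (T₀ ω) (by linarith : μ ≠ 1)] at hstrict
        have : g ω > 0 := by simp only [hg_def]; linarith
        simp only [Pi.zero_apply] at h0
        linarith
      have : P {ω | T₀ ω = μ} = 1 := by
        have huniv : {ω | T₀ ω = μ} =ᵐ[P] (Set.univ : Set Ω) := by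
          rw [Filter.eventuallyEq_univ]
          exact hTμ
        rw [measure_congr huniv, measure_univ]
      rw [this] at hPeq
      exact lt_irrefl _ hPeq
  -- combine
  have hsplit : ∫ ω, Real.log ((1 - c) + c * (1 - T₀ ω) / (1 - μ)) ∂P
      = (∫ ω, c * (μ - T₀ ω) / (1 - μ) ∂P) - ∫ ω, g ω ∂P := by
    rw [← integral_sub hlin_int hg_int]
    congr 1
    funext ω
    simp only [hg_def]
    ring
  have hlin_eq : ∫ ω, c * (μ - T₀ ω) / (1 - μ) ∂P
      = (c / (1 - μ)) * (μ - ∫ ω, T₀ ω ∂P) := by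
    have : (fun ω => c * (μ - T₀ ω) / (1 - μ))
        = fun ω => (c / (1 - μ)) * (μ - T₀ ω) := by
      funext ω; field_simp
    rw [this, integral_const_mul, integral_sub (integrable_const μ) hT₀int, integral_const]
    simp
  have hlin_nonpos : (c / (1 - μ)) * (μ - ∫ ω, T₀ ω ∂P) ≤ 0 := by
    apply mul_nonpos_of_nonneg_of_nonpos
    · positivity
    · linarith
  rw [hsplit, hlin_eq]
  linarith
/-- If iid integrable reals have positive mean, partial sums tend to infinity a.s. -/
lemma tsm_sum_tendsto_atTop {Ω : Type*} {mΩ : MeasurableSpace Ω} {P : Measure Ω}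
    [IsProbabilityMeasure P] (X : ℕ → Ω → ℝ) (hint : Integrable (X 0) P)
    (hindep : Pairwise (Function.onFun (IndepFun · · P) X))
    (hident : ∀ i, IdentDistrib (X i) (X 0) P P)
    (hpos : 0 < ∫ ω, X 0 ω ∂P) :
    ∀ᵐ ω ∂P, Tendsto (fun n => ∑ i ∈ Finset.range n, X i ω) atTop atTop := by
  filter_upwards [strong_law_ae_real X hint hindep hident] with ω hω
  have h1 : Tendsto (fun n : ℕ => (n : ℝ) * ((∑ i ∈ Finset.range n, X i ω) / n))
      atTop atTop :=
    Tendsto.atTop_mul_pos hpos tendsto_natCast_atTop_atTop hω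
  refine h1.congr' ?_
  filter_upwards [eventually_ge_atTop 1] with n hn
  have hn' : (n : ℝ) ≠ 0 := Nat.cast_ne_zero.2 (by omega)
  field_simp

/-- Bound for the inverse factor on `[0,1]`. -/
lemma tsm_inv_bound (μ c t : ℝ) (hμ : μ ∈ Set.Ioo (0:ℝ) 1) (hc : c ∈ Set.Ioo (0:ℝ) 1)
    (ht : t ∈ Set.Icc (0:ℝ) 1) :
    |((1 - c) + c * (1 - t) / (1 - μ))⁻¹| ≤ (1 - c)⁻¹ := by
  obtain ⟨hlb, hub⟩ := tsm_bounds μ c t hμ hc ht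
  have hb : (0:ℝ) < 1 - c := by linarith [hc.2]
  have hf : (0:ℝ) < (1 - c) + c * (1 - t) / (1 - μ) := by linarith
  rw [abs_of_nonneg (inv_nonneg.2 hf.le)]
  exact inv_anti₀ hb hlb

/-- The convex combination identity at `θ`. -/
lemma tsm_comb_one (μ c θ : ℝ) (hμ : μ ∈ Set.Ioo (0:ℝ) 1) (hc : c ∈ Set.Ioo (0:ℝ) 1)
    (hθ : θ = (1 - c) * μ) :
    (1 - θ) * ((1 - c) + c / (1 - μ))⁻¹ + θ * (1 - c)⁻¹ = 1 := by
  obtain ⟨hμ0, hμ1⟩ := hμ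
  obtain ⟨hc0, hc1⟩ := hc
  have h1μ : (0:ℝ) < 1 - μ := by linarith
  have hb : (0:ℝ) < 1 - c := by linarith
  have ha : (0:ℝ) < (1 - c) + c / (1 - μ) := by
    have := div_pos hc0 h1μ; linarith
  rw [hθ]
  field_simp
  ring

/-- First conclusion of part (i). -/
lemma tsm_integral_inv_le_one {Ω : Type*} {mΩ : MeasurableSpace Ω} (P : Measure Ω)
    [IsProbabilityMeasure P] (μ c θ : ℝ) (hμ : μ ∈ Set.Ioo (0:ℝ) 1)
    (hc : c ∈ Set.Ioo (0:ℝ) 1) (hθ : θ = (1 - c) * μ)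
    (T₀ : Ω → ℝ) (hT₀int : Integrable T₀ P)
    (hT₀range : ∀ᵐ ω ∂P, T₀ ω ∈ Set.Icc (0:ℝ) 1)
    (hET : ∫ ω, T₀ ω ∂P ≤ θ) :
    ∫ ω, ((1 - c) + c * (1 - T₀ ω) / (1 - μ))⁻¹ ∂P ≤ 1 := by
  obtain ⟨hμ0, hμ1⟩ := hμ
  obtain ⟨hc0, hc1⟩ := hc
  have h1μ : (0:ℝ) < 1 - μ := by linarith
  have hb : (0:ℝ) < 1 - c := by linarith
  have ha : (0:ℝ) < (1 - c) + c / (1 - μ) := by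
    have := div_pos hc0 h1μ; linarith
  set A : ℝ := ((1 - c) + c / (1 - μ))⁻¹ with hA_def
  set B : ℝ := (1 - c)⁻¹ with hB_def
  have hAB : A ≤ B := by
    rw [hA_def, hB_def]
    apply inv_anti₀ hb
    have := div_pos hc0 h1μ; linarith
  have hinv_int : Integrable (fun ω => ((1 - c) + c * (1 - T₀ ω) / (1 - μ))⁻¹) P :=
    tsm_integrable_comp P T₀ hT₀int.aemeasurable hT₀range _
      (tsm_measurable_factor μ c).inv _ (fun t ht => tsm_inv_bound μ c t ⟨hμ0, hμ1⟩ ⟨hc0, hc1⟩ ht)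
  have hlin_int : Integrable (fun ω => A + (B - A) * T₀ ω) P :=
    (integrable_const A).add (hT₀int.const_mul _)
  have hmono : ∫ ω, ((1 - c) + c * (1 - T₀ ω) / (1 - μ))⁻¹ ∂P
      ≤ ∫ ω, (A + (B - A) * T₀ ω) ∂P := by
    refine integral_mono_ae hinv_int hlin_int ?_
    filter_upwards [hT₀range] with ω hω
    have := tsm_inv_chord μ c (T₀ ω) ⟨hμ0, hμ1⟩ ⟨hc0, hc1⟩ hω
    calc ((1 - c) + c * (1 - T₀ ω) / (1 - μ))⁻¹
        ≤ (1 - T₀ ω) * A + T₀ ω * B := this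
      _ = A + (B - A) * T₀ ω := by ring
  have hlin_eq : ∫ ω, (A + (B - A) * T₀ ω) ∂P = A + (B - A) * ∫ ω, T₀ ω ∂P := by
    rw [integral_add (integrable_const A) (hT₀int.const_mul _), integral_const,
      integral_const_mul]
    simp
  have hcomb := tsm_comb_one μ c θ ⟨hμ0, hμ1⟩ ⟨hc0, hc1⟩ hθ
  have : A + (B - A) * ∫ ω, T₀ ω ∂P ≤ A + (B - A) * θ := by nlinarith
  have hcomb' : A + (B - A) * θ = (1 - θ) * A + θ * B := by ring
  linarith [hmono, hlin_eq ▸ hmono]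

/-- The inverse test supermartingale.  Let `T₀` take values in `[0,1]` a.s., let
`0 < μ < 1`, `0 < c < 1`, `θ = (1−c)·μ`, let `T 0, T 1, …` be an i.i.d. sample of `T₀`
(with natural filtration `ℱ`), and let `M k = ∏_{i<k} ((1−c) + c·(1−T i)/(1−μ))`.  Then:
(i) if `E[T₀] ≤ θ`, then `E[((1−c) + c·(1−T₀)/(1−μ))⁻¹] ≤ 1`, the process `{(M k)⁻¹}` is a
nonnegative supermartingale, and `M k → +∞` a.s.;
(ii) if `E[T₀] ≥ μ` and `P(T₀ = μ) < 1`, then `(M k)⁻¹ → +∞` a.s. -/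
theorem inverse_test_supermartingale
    {Ω : Type*} {mΩ : MeasurableSpace Ω} (P : Measure Ω) [IsProbabilityMeasure P]
    (μ : ℝ) (hμ : μ ∈ Set.Ioo (0 : ℝ) 1)
    (c : ℝ) (hc : c ∈ Set.Ioo (0 : ℝ) 1)
    (θ : ℝ) (hθ : θ = (1 - c) * μ)
    (T₀ : Ω → ℝ) (hT₀int : Integrable T₀ P) (hT₀range : ∀ᵐ ω ∂P, T₀ ω ∈ Set.Icc (0 : ℝ) 1)
    (T : ℕ → Ω → ℝ)
    (hindep : iIndepFun T P)
    (hident : ∀ i, IdentDistrib (T i) T₀ P P)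
    (ℱ : Filtration ℕ mΩ)
    (hℱ : ∀ k, ℱ k = ⨆ i ∈ Finset.range k, MeasurableSpace.comap (T i) inferInstance)
    (M : ℕ → Ω → ℝ)
    (hM : ∀ k ω, M k ω = ∏ i ∈ Finset.range k, ((1 - c) + c * (1 - T i ω) / (1 - μ))) :
    (∫ ω, T₀ ω ∂P ≤ θ →
      (∫ ω, ((1 - c) + c * (1 - T₀ ω) / (1 - μ))⁻¹ ∂P ≤ 1) ∧
      Supermartingale (fun k ω => (M k ω)⁻¹) ℱ P ∧
      (∀ k, ∀ᵐ ω ∂P, 0 ≤ (M k ω)⁻¹) ∧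
      (∀ᵐ ω ∂P, Tendsto (fun k => M k ω) atTop atTop)) ∧
    (μ ≤ ∫ ω, T₀ ω ∂P → P {ω | T₀ ω = μ} < 1 →
      ∀ᵐ ω ∂P, Tendsto (fun k => (M k ω)⁻¹) atTop atTop) := by
  have hμ0 := hμ.1
  have hμ1 := hμ.2
  have hc0 := hc.1
  have hc1 := hc.2
  have h1μ : (0:ℝ) < 1 - μ := by linarith
  have hb : (0:ℝ) < 1 - c := by linarith
  -- measurability of the T i
  have hcomap_le : ∀ i, MeasurableSpace.comap (T i) inferInstance ≤ mΩ := by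
    intro i
    have h1 : MeasurableSpace.comap (T i) inferInstance ≤ ℱ (i + 1) := by
      rw [hℱ (i + 1)]
      exact le_iSup₂ (f := fun j (_ : j ∈ Finset.range (i + 1)) =>
        MeasurableSpace.comap (T j) inferInstance) i (Finset.mem_range.2 (Nat.lt_succ_self i))
    exact h1.trans (ℱ.le (i + 1))
  have hTmeas : ∀ i, Measurable (T i) := fun i => measurable_iff_comap_le.2 (hcomap_le i)
  have hTmeasF : ∀ i k, i < k → Measurable[ℱ k] (T i) := by
    intro i k hik
    refine measurable_iff_comap_le.2 ?_
    rw [hℱ k]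
    exact le_iSup₂ (f := fun j (_ : j ∈ Finset.range k) =>
      MeasurableSpace.comap (T j) inferInstance) i (Finset.mem_range.2 hik)
  -- ranges
  have hTrange : ∀ᵐ ω ∂P, ∀ i, T i ω ∈ Set.Icc (0:ℝ) 1 := by
    rw [ae_all_iff]
    intro i
    exact (hident i).symm.ae_snd (p := fun x => x ∈ Set.Icc (0:ℝ) 1)
      measurableSet_Icc hT₀range
  -- measurability of M k
  have hMF : ∀ k, Measurable[ℱ k] (M k) := by
    intro k
    have hMk : M k = fun ω => ∏ i ∈ Finset.range k, ((1 - c) + c * (1 - T i ω) / (1 - μ)) :=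
      funext (hM k)
    rw [hMk]
    exact Finset.measurable_prod _ (fun i hi =>
      (tsm_measurable_factor μ c).comp (hTmeasF i k (Finset.mem_range.1 hi)))
  have hMmeas : ∀ k, Measurable (M k) := fun k => (hMF k).mono (ℱ.le k) le_rfl
  -- a.e. bounds on M k
  have hMprop : ∀ᵐ ω ∂P, ∀ k, (1 - c) ^ k ≤ M k ω := by
    filter_upwards [hTrange] with ω hω
    intro k
    rw [hM]
    calc ((1:ℝ) - c) ^ k = ∏ _i ∈ Finset.range k, (1 - c) := by
          rw [Finset.prod_const, Finset.card_range]
      _ ≤ _ := Finset.prod_le_prod (fun i _ => hb.le)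
          (fun i _ => (tsm_bounds μ c _ hμ hc (hω i)).1)
  have hMpos : ∀ᵐ ω ∂P, ∀ k, 0 < M k ω := by
    filter_upwards [hMprop] with ω hω k
    exact lt_of_lt_of_le (by positivity) (hω k)
  -- integrability of (M k)⁻¹
  have hMinv_int : ∀ k, Integrable (fun ω => (M k ω)⁻¹) P := by
    intro k
    refine Integrable.mono' (integrable_const (((1 - c) ^ k)⁻¹))
      ((hMmeas k).inv.aestronglyMeasurable) ?_
    filter_upwards [hMprop] with ω hω
    have h1 := hω k
    have hpk : (0:ℝ) < (1 - c) ^ k := by positivity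
    rw [Real.norm_eq_abs, abs_of_nonneg (inv_nonneg.2 (le_trans hpk.le h1))]
    exact inv_anti₀ hpk h1
  -- adaptedness
  have hadp : StronglyAdapted ℱ fun k ω => (M k ω)⁻¹ := fun k => ((hMF k).inv).stronglyMeasurable
  -- independence of σ-algebras
  have hindepk : ∀ k, Indep (MeasurableSpace.comap (T k) inferInstance) (ℱ k) P := by
    intro k
    have h := indep_iSup_of_disjoint (m := fun i => MeasurableSpace.comap (T i) inferInstance)
      hcomap_le hindep.iIndep (S := {k}) (T := {i : ℕ | i < k})
      (by
        rw [Set.disjoint_left]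
        intro a ha ha'
        simp only [Set.mem_singleton_iff] at ha
        simp only [Set.mem_setOf_eq] at ha'
        omega)
    have h1 : (⨆ i ∈ ({k} : Set ℕ), MeasurableSpace.comap (T i) inferInstance)
        = MeasurableSpace.comap (T k) inferInstance := by simp
    have h2 : (⨆ i ∈ {i : ℕ | i < k}, MeasurableSpace.comap (T i) inferInstance) = ℱ k := by
      rw [hℱ k]
      refine le_antisymm ?_ ?_
      · exact iSup₂_le fun i hi => le_iSup₂ (f := fun j (_ : j ∈ Finset.range k) =>
          MeasurableSpace.comap (T j) inferInstance) i (Finset.mem_range.2 hi)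
      · exact iSup₂_le fun i hi => le_iSup₂ (f := fun j (_ : j ∈ {i : ℕ | i < k}) =>
          MeasurableSpace.comap (T j) inferInstance) i (Finset.mem_range.1 hi)
    rwa [h1, h2] at h
  -- part (i)
  constructor
  · intro hET
    have hEinv := tsm_integral_inv_le_one P μ c θ hμ hc hθ T₀ hT₀int hT₀range hET
    refine ⟨hEinv, ?_, ?_, ?_⟩
    · -- supermartingale
      refine supermartingale_nat hadp hMinv_int ?_
      intro k
      have hEq1 : (fun ω => (M (k + 1) ω)⁻¹)
          = (fun ω => (M k ω)⁻¹) * (fun ω => ((1 - c) + c * (1 - T k ω) / (1 - μ))⁻¹) := by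
        funext ω
        simp only [Pi.mul_apply]
        rw [hM, hM, Finset.prod_range_succ, mul_inv]
      have hTkrange : ∀ᵐ ω ∂P, T k ω ∈ Set.Icc (0:ℝ) 1 := hTrange.mono fun ω h => h k
      have hg_int : Integrable (fun ω => ((1 - c) + c * (1 - T k ω) / (1 - μ))⁻¹) P :=
        tsm_integrable_comp P (T k) (hTmeas k).aemeasurable hTkrange _
          (tsm_measurable_factor μ c).inv _ (fun t ht => tsm_inv_bound μ c t hμ hc ht)
      have hfg_int : Integrable
          ((fun ω => (M k ω)⁻¹) * fun ω => ((1 - c) + c * (1 - T k ω) / (1 - μ))⁻¹) P := by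
        rw [← hEq1]; exact hMinv_int (k + 1)
      have hpull := condExp_mul_of_stronglyMeasurable_left (μ := P) (m := ℱ k)
        ((hMF k).inv.stronglyMeasurable) hfg_int hg_int
      have hgFk : Measurable[MeasurableSpace.comap (T k) inferInstance]
          (fun ω => ((1 - c) + c * (1 - T k ω) / (1 - μ))⁻¹) :=
        (tsm_measurable_factor μ c).inv.comp (measurable_iff_comap_le.2 le_rfl)
      have hcond_g : P[(fun ω => ((1 - c) + c * (1 - T k ω) / (1 - μ))⁻¹) | ℱ k]
          =ᵐ[P] fun _ => ∫ ω, ((1 - c) + c * (1 - T k ω) / (1 - μ))⁻¹ ∂P :=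
        condExp_indep_eq (hcomap_le k) (ℱ.le k) hgFk.stronglyMeasurable (hindepk k)
      have hEg_eq : ∫ ω, ((1 - c) + c * (1 - T k ω) / (1 - μ))⁻¹ ∂P
          = ∫ ω, ((1 - c) + c * (1 - T₀ ω) / (1 - μ))⁻¹ ∂P := by
        have hid : IdentDistrib (fun ω => ((1 - c) + c * (1 - T k ω) / (1 - μ))⁻¹)
            (fun ω => ((1 - c) + c * (1 - T₀ ω) / (1 - μ))⁻¹) P P :=
          (hident k).comp (tsm_measurable_factor μ c).inv
        exact hid.integral_eq
      have hEg_le : ∫ ω, ((1 - c) + c * (1 - T k ω) / (1 - μ))⁻¹ ∂P ≤ 1 := by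
        rw [hEg_eq]; exact hEinv
      rw [hEq1]
      refine hpull.le.trans ?_
      filter_upwards [hcond_g, hMprop] with ω h1 h2
      simp only [Pi.mul_apply]
      rw [h1]
      have hnn : 0 ≤ (M k ω)⁻¹ := inv_nonneg.2 (le_trans (by positivity) (h2 k))
      exact mul_le_of_le_one_right hnn hEg_le
    · -- nonnegativity
      intro k
      filter_upwards [hMpos] with ω hω
      exact inv_nonneg.2 (hω k).le
    · -- divergence of M
      have hX0int : Integrable (fun ω => Real.log ((1 - c) + c * (1 - T 0 ω) / (1 - μ))) P :=
        tsm_integrable_log P μ c hμ hc (T 0) (hTmeas 0).aemeasurable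
          (hTrange.mono fun ω h => h 0)
      have hXindep : Pairwise (Function.onFun (IndepFun · · P)
          fun i ω => Real.log ((1 - c) + c * (1 - T i ω) / (1 - μ))) := by
        intro i j hij
        exact (hindep.indepFun hij).comp (tsm_measurable_log μ c) (tsm_measurable_log μ c)
      have hXident : ∀ i, IdentDistrib
          (fun ω => Real.log ((1 - c) + c * (1 - T i ω) / (1 - μ)))
          (fun ω => Real.log ((1 - c) + c * (1 - T 0 ω) / (1 - μ))) P P := fun i =>
        ((hident i).trans (hident 0).symm).comp (tsm_measurable_log μ c)
      have hXpos : 0 < ∫ ω, Real.log ((1 - c) + c * (1 - T 0 ω) / (1 - μ)) ∂P := by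
        have := ((hident 0).comp (tsm_measurable_log μ c)).integral_eq
        rw [show (fun ω => Real.log ((1 - c) + c * (1 - T 0 ω) / (1 - μ)))
            = (fun t => Real.log ((1 - c) + c * (1 - t) / (1 - μ))) ∘ (T 0) from rfl] at *
        calc (0:ℝ) < ∫ ω, Real.log ((1 - c) + c * (1 - T₀ ω) / (1 - μ)) ∂P :=
              tsm_integral_log_pos P μ c θ hμ hc hθ T₀ hT₀int hT₀range hET
          _ = _ := this.symm
      have hsum := tsm_sum_tendsto_atTop
        (fun i ω => Real.log ((1 - c) + c * (1 - T i ω) / (1 - μ)))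
        hX0int hXindep hXident hXpos
      filter_upwards [hsum, hTrange] with ω hω hr
      have hMexp : ∀ k, M k ω
          = Real.exp (∑ i ∈ Finset.range k, Real.log ((1 - c) + c * (1 - T i ω) / (1 - μ))) := by
        intro k
        rw [hM, Real.exp_sum]
        refine Finset.prod_congr rfl fun i _ => ?_
        have hpos : (0:ℝ) < (1 - c) + c * (1 - T i ω) / (1 - μ) := by
          have := (tsm_bounds μ c _ hμ hc (hr i)).1; linarith
        exact (Real.exp_log hpos).symm
      exact (Real.tendsto_exp_atTop.comp hω).congr fun k => (hMexp k).symm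
  -- part (ii)
  · intro hET hPeq
    have hX0int : Integrable (fun ω => -Real.log ((1 - c) + c * (1 - T 0 ω) / (1 - μ))) P :=
      (tsm_integrable_log P μ c hμ hc (T 0) (hTmeas 0).aemeasurable
        (hTrange.mono fun ω h => h 0)).neg
    have hXindep : Pairwise (Function.onFun (IndepFun · · P)
        fun i ω => -Real.log ((1 - c) + c * (1 - T i ω) / (1 - μ))) := by
      intro i j hij
      exact (hindep.indepFun hij).comp (tsm_measurable_log μ c).neg (tsm_measurable_log μ c).neg
    have hXident : ∀ i, IdentDistrib
        (fun ω => -Real.log ((1 - c) + c * (1 - T i ω) / (1 - μ)))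
        (fun ω => -Real.log ((1 - c) + c * (1 - T 0 ω) / (1 - μ))) P P := fun i =>
      ((hident i).trans (hident 0).symm).comp (tsm_measurable_log μ c).neg
    have hXpos : 0 < ∫ ω, -Real.log ((1 - c) + c * (1 - T 0 ω) / (1 - μ)) ∂P := by
      have hid := ((hident 0).comp (tsm_measurable_log μ c).neg).integral_eq
      calc (0:ℝ) < ∫ ω, -Real.log ((1 - c) + c * (1 - T₀ ω) / (1 - μ)) ∂P := by
            rw [integral_neg]
            have := tsm_integral_log_neg P μ c hμ hc T₀ hT₀int hT₀range hET hPeq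
            linarith
        _ = _ := hid.symm
    have hsum := tsm_sum_tendsto_atTop
      (fun i ω => -Real.log ((1 - c) + c * (1 - T i ω) / (1 - μ)))
      hX0int hXindep hXident hXpos
    filter_upwards [hsum, hTrange] with ω hω hr
    have hMexp : ∀ k, (M k ω)⁻¹
        = Real.exp (∑ i ∈ Finset.range k, -Real.log ((1 - c) + c * (1 - T i ω) / (1 - μ))) := by
      intro k
      rw [Finset.sum_neg_distrib, Real.exp_neg, hM, Real.exp_sum]
      congr 1
      refine Finset.prod_congr rfl fun i _ => ?_
      have hpos : (0:ℝ) < (1 - c) + c * (1 - T i ω) / (1 - μ) := by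
        have := (tsm_bounds μ c _ hμ hc (hr i)).1; linarith
      exact (Real.exp_log hpos).symm
    exact (Real.tendsto_exp_atTop.comp hω).congr fun k => (hMexp k).symm
end

section
/- Let 0 < μ < 1 and 0 < ν < 1, and let X be a random variable with 0 ≤ X ≤ 1 almost surely such that (E[X] − μ)(ν − μ) ≤ 0. Define g(t, ν, μ) = (ν^t (1−ν)^{1−t})/(μ^t (1−μ)^{1−t}). Then E[g(X, ν, μ)] ≤ 1. Moreover, if ν > μ, then for all t ∈ [0,1], g(t, ν, μ) ≤ ((1−ν)/(1−μ))·(1−t) + (ν/μ)·t, i.e., the Bernoulli likelihood ratio is dominated by the affine factor (1−c) + c·t/μ with c = (ν−μ)/(1−μ). -/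
open MeasureTheory

lemma rpow_le_affine {r t : ℝ} (hr : 0 < r) (ht0 : 0 ≤ t) (ht1 : t ≤ 1) :
    r ^ t ≤ (1 - t) + t * r := by
  have h := convexOn_exp.2 (Set.mem_univ (0 : ℝ)) (Set.mem_univ (Real.log r))
    (by linarith : (0:ℝ) ≤ 1 - t) ht0 (by ring)
  simp only [smul_eq_mul, mul_zero, zero_add, Real.exp_zero, Real.exp_log hr, mul_one] at h
  rw [Real.rpow_def_of_pos hr, mul_comm]
  linarith

lemma g_le_affine {μ ν t : ℝ} (hμ : μ ∈ Set.Ioo (0 : ℝ) 1) (hν : ν ∈ Set.Ioo (0 : ℝ) 1)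
    (ht0 : 0 ≤ t) (ht1 : t ≤ 1) :
    (ν ^ t * (1 - ν) ^ (1 - t)) / (μ ^ t * (1 - μ) ^ (1 - t)) ≤
      ((1 - ν) / (1 - μ)) * (1 - t) + (ν / μ) * t := by
  obtain ⟨hμ0, hμ1⟩ := hμ
  obtain ⟨hν0, hν1⟩ := hν
  have h1μ : (0:ℝ) < 1 - μ := by linarith
  have h1ν : (0:ℝ) < 1 - ν := by linarith
  set r : ℝ := ν * (1 - μ) / (μ * (1 - ν)) with hr_def
  have hr : 0 < r := by positivity
  have hid : (ν ^ t * (1 - ν) ^ (1 - t)) / (μ ^ t * (1 - μ) ^ (1 - t)) =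
      ((1 - ν) / (1 - μ)) * r ^ t := by
    have e1 : (1 - ν) ^ (1 - t) = (1 - ν) / (1 - ν) ^ t := by
      rw [Real.rpow_sub h1ν, Real.rpow_one]
    have e2 : (1 - μ) ^ (1 - t) = (1 - μ) / (1 - μ) ^ t := by
      rw [Real.rpow_sub h1μ, Real.rpow_one]
    have e3 : r ^ t = ν ^ t * (1 - μ) ^ t / (μ ^ t * (1 - ν) ^ t) := by
      rw [hr_def, Real.div_rpow (by positivity) (by positivity),
        Real.mul_rpow hν0.le h1μ.le, Real.mul_rpow hμ0.le h1ν.le]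
    rw [e1, e2, e3]
    have p1 : (0:ℝ) < μ ^ t := Real.rpow_pos_of_pos hμ0 t
    have p2 : (0:ℝ) < (1 - μ) ^ t := Real.rpow_pos_of_pos h1μ t
    have p3 : (0:ℝ) < ν ^ t := Real.rpow_pos_of_pos hν0 t
    have p4 : (0:ℝ) < (1 - ν) ^ t := Real.rpow_pos_of_pos h1ν t
    field_simp
  rw [hid]
  have hb := rpow_le_affine hr ht0 ht1
  have hA : (0:ℝ) ≤ (1 - ν) / (1 - μ) := by positivity
  calc ((1 - ν) / (1 - μ)) * r ^ t ≤ ((1 - ν) / (1 - μ)) * ((1 - t) + t * r) :=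
        mul_le_mul_of_nonneg_left hb hA
    _ = ((1 - ν) / (1 - μ)) * (1 - t) + (ν / μ) * t := by
        rw [hr_def]; field_simp

/-- Let `0 < μ < 1`, `0 < ν < 1`, and let `X` take values in `[0,1]` a.s. with
`(E[X] − μ)(ν − μ) ≤ 0`.  For the Bernoulli likelihood ratio
`g(t) = ν^t (1−ν)^(1−t) / (μ^t (1−μ)^(1−t))` one has `E[g(X)] ≤ 1`; moreover if `ν > μ`
then `g(t) ≤ ((1−ν)/(1−μ))·(1−t) + (ν/μ)·t` for all `t ∈ [0,1]`, i.e. `g` is dominated by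
the affine factor `(1−c) + c·t/μ` with `c = (ν−μ)/(1−μ)`. -/
theorem bernoulli_likelihood_ratio_factor
    {Ω : Type*} {mΩ : MeasurableSpace Ω} (P : Measure Ω) [IsProbabilityMeasure P]
    (μ ν : ℝ) (hμ : μ ∈ Set.Ioo (0 : ℝ) 1) (hν : ν ∈ Set.Ioo (0 : ℝ) 1)
    (X : Ω → ℝ) (hXmeas : Measurable X) (hXrange : ∀ᵐ ω ∂P, X ω ∈ Set.Icc (0 : ℝ) 1)
    (hXμν : (∫ ω, X ω ∂P - μ) * (ν - μ) ≤ 0) :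
    (∫ ω, (ν ^ X ω * (1 - ν) ^ (1 - X ω)) / (μ ^ X ω * (1 - μ) ^ (1 - X ω)) ∂P ≤ 1) ∧
      (μ < ν → ∀ t ∈ Set.Icc (0 : ℝ) 1,
        (ν ^ t * (1 - ν) ^ (1 - t)) / (μ ^ t * (1 - μ) ^ (1 - t)) ≤
          ((1 - ν) / (1 - μ)) * (1 - t) + (ν / μ) * t) := by
  obtain ⟨hμ0, hμ1⟩ := hμ
  obtain ⟨hν0, hν1⟩ := hν
  have h1μ : (0:ℝ) < 1 - μ := by linarith
  have h1ν : (0:ℝ) < 1 - ν := by linarith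
  constructor
  · -- integral bound
    set A : ℝ := (1 - ν) / (1 - μ) with hA_def
    set B : ℝ := ν / μ with hB_def
    have hXint : Integrable X P := by
      refine (integrable_const (1:ℝ)).mono' hXmeas.aestronglyMeasurable ?_
      filter_upwards [hXrange] with ω hω
      rw [Real.norm_eq_abs, abs_of_nonneg hω.1]; exact hω.2
    have hI1 : Integrable (fun ω => A * (1 - X ω)) P :=
      ((integrable_const (1:ℝ)).sub hXint).const_mul A
    have hI2 : Integrable (fun ω => B * X ω) P := hXint.const_mul B
    have hint : Integrable (fun ω => A * (1 - X ω) + B * X ω) P := hI1.add hI2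
    have hmono : ∫ ω, (ν ^ X ω * (1 - ν) ^ (1 - X ω)) / (μ ^ X ω * (1 - μ) ^ (1 - X ω)) ∂P ≤
        ∫ ω, A * (1 - X ω) + B * X ω ∂P := by
      refine integral_mono_of_nonneg ?_ hint ?_
      · filter_upwards with ω
        positivity
      · filter_upwards [hXrange] with ω hω
        exact g_le_affine ⟨hμ0, hμ1⟩ ⟨hν0, hν1⟩ hω.1 hω.2
    have hval : ∫ ω, A * (1 - X ω) + B * X ω ∂P =
        A * (1 - ∫ ω, X ω ∂P) + B * ∫ ω, X ω ∂P := by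
      rw [integral_add hI1 hI2, integral_const_mul, integral_const_mul,
        integral_sub (integrable_const 1) hXint, integral_const]
      simp
    set m : ℝ := ∫ ω, X ω ∂P with hm_def
    have hfinal : A * (1 - m) + B * m ≤ 1 := by
      rw [hA_def, hB_def]
      have key : (1 - ν) / (1 - μ) * (1 - m) + ν / μ * m - 1 =
          ((m - μ) * (ν - μ)) / (μ * (1 - μ)) := by
        field_simp
        ring
      have hpos : (0:ℝ) < μ * (1 - μ) := by positivity
      have : ((m - μ) * (ν - μ)) / (μ * (1 - μ)) ≤ 0 :=
        div_nonpos_of_nonpos_of_nonneg hXμν hpos.le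
      linarith
    calc _ ≤ ∫ ω, A * (1 - X ω) + B * X ω ∂P := hmono
      _ = A * (1 - m) + B * m := hval
      _ ≤ 1 := hfinal
  · intro _ t ht
    exact g_le_affine ⟨hμ0, hμ1⟩ ⟨hν0, hν1⟩ ht.1 ht.2
end
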